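/- Each noncrossing tree P has a unique decomposition as an ordered sequence of based noncrossing trees along the unique path in P from the left endpoint to the right endpoint of the base side; equivalently, P is uniquely a *-product of based noncrossing trees. -/

import Mathlib

/-- Two chords `e = {e.1, e.2}` and `f = {f.1, f.2}` of a convex polygon (with
vertices labelled cyclically and each chord written with increasing endpoints)
cross if their endpoints interlace strictly. -/
def Cross {m : ℕ} (e f : Fin m × Fin m) : Prop :=
  (e.1 < f.1 ∧ f.1 < e.2 ∧ e.2 < f.2) ∨ (f.1 < e.1 ∧ e.1 < f.2 ∧ f.2 < e.2)

/-- `E` is a noncrossing tree of degree `n` in the convex polygon `O_n` with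
`n+1` vertices `0, 1, …, n` (the base side being `{0, n}`): a set of pairwise
noncrossing chords (written with increasing endpoints) forming a spanning tree
on the `n+1` vertices; equivalently, a maximal noncrossing acyclic set of
chords. -/
def IsNCT (n : ℕ) (E : Finset (Fin (n+1) × Fin (n+1))) : Prop :=
  (∀ e ∈ E, e.1 < e.2) ∧
  (∀ e ∈ E, ∀ f ∈ E, ¬ Cross e f) ∧
  (SimpleGraph.fromEdgeSet {s : Sym2 (Fin (n+1)) | ∃ e ∈ E, s = s(e.1, e.2)}).IsTree


section ListLemmas
variable {α : Type*} [LinearOrder α]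

lemma nct_pairs_spec :
    ∀ (l : List α), l.Pairwise (· < ·) → ∀ p ∈ l.zip l.tail,
      p.1 ∈ l ∧ p.2 ∈ l ∧ p.1 < p.2 ∧ ∀ c ∈ l, ¬(p.1 < c ∧ c < p.2)
  | [], _, p, hp => by simp at hp
  | [a], _, p, hp => by simp at hp
  | a :: b :: t, hc, p, hp => by
    rw [List.pairwise_cons] at hc
    simp only [List.tail_cons, List.zip_cons_cons, List.mem_cons] at hp
    rcases hp with rfl | hp
    · refine ⟨by simp, by simp, hc.1 b (by simp), ?_⟩
      rintro c hc' ⟨h1, h2⟩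
      rcases List.mem_cons.mp hc' with rfl | hc'
      · exact absurd h1 (lt_irrefl _)
      · have hb : b ≤ c := by
          rcases List.mem_cons.mp hc' with rfl | hc'
          · exact le_refl _
          · exact le_of_lt ((List.pairwise_cons.mp hc.2).1 c hc')
        exact absurd h2 (not_lt.mpr hb)
    · have ih := nct_pairs_spec (b :: t) hc.2 p hp
      refine ⟨List.mem_cons_of_mem _ ih.1, List.mem_cons_of_mem _ ih.2.1, ih.2.2.1, ?_⟩
      rintro c hcmem ⟨h1, h2⟩
      rcases List.mem_cons.mp hcmem with rfl | hm
      · exact absurd (lt_trans (hc.1 _ ih.1) h1) (lt_irrefl _)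
      · exact ih.2.2.2 c hm ⟨h1, h2⟩

lemma nct_mem_zip :
    ∀ (l : List α), l.Pairwise (· < ·) → ∀ x y : α, x ∈ l → y ∈ l → x < y →
      (∀ c ∈ l, ¬(x < c ∧ c < y)) → (x, y) ∈ l.zip l.tail
  | [], _, x, y, hx, _, _, _ => by simp at hx
  | [a], _, x, y, hx, hy, hxy, _ => by
    simp at hx hy; subst hx; subst hy; exact absurd hxy (lt_irrefl _)
  | a :: b :: t, hc, x, y, hx, hy, hxy, hno => by
    rw [List.pairwise_cons] at hc
    simp only [List.tail_cons, List.zip_cons_cons, List.mem_cons]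
    rcases List.mem_cons.mp hx with rfl | hx
    · -- x = a
      rcases List.mem_cons.mp hy with rfl | hy
      · exact absurd hxy (lt_irrefl _)
      rcases List.mem_cons.mp hy with rfl | hy
      · exact Or.inl rfl
      · exfalso
        exact hno b (by simp) ⟨hc.1 b (by simp), (List.pairwise_cons.mp hc.2).1 y hy⟩
    · rcases List.mem_cons.mp hy with h | hy
      · exact absurd (lt_trans (hc.1 x hx) (h ▸ hxy)) (lt_irrefl _)
      · exact Or.inr (nct_mem_zip (b :: t) hc.2 x y hx hy hxy
          (fun c hcm => hno c (List.mem_cons_of_mem _ hcm)))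

lemma nct_mem_or_between :
    ∀ (l : List α) (hl : l ≠ []) (x : α), l.head hl ≤ x → x ≤ l.getLast hl →
      x ∈ l ∨ ∃ p ∈ l.zip l.tail, p.1 < x ∧ x < p.2
  | [], hl, _, _, _ => absurd rfl hl
  | [a], _, x, h1, h2 => by
    left; simp only [List.head_cons] at h1; simp only [List.getLast_singleton] at h2
    simp [le_antisymm h2 h1]
  | a :: b :: t, _, x, h1, h2 => by
    simp only [List.head_cons] at h1
    rcases eq_or_lt_of_le h1 with rfl | hax
    · left; simp
    · rcases lt_or_ge x b with hxb | hbx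
      · right; exact ⟨(a, b), by simp, hax, hxb⟩
      · have h2' : x ≤ (b :: t).getLast (by simp) := by
          rwa [List.getLast_cons (by simp)] at h2
        rcases nct_mem_or_between (b :: t) (by simp) x hbx h2' with hm | ⟨p, hp, hlt⟩
        · exact Or.inl (List.mem_cons_of_mem _ hm)
        · refine Or.inr ⟨p, ?_, hlt⟩
          simp only [List.tail_cons, List.zip_cons_cons]
          exact List.mem_cons_of_mem _ hp

lemma nct_sorted_eq :
    ∀ (l1 l2 : List α), l1.Pairwise (· < ·) → l2.Pairwise (· < ·) →
      (∀ x, x ∈ l1 ↔ x ∈ l2) → l1 = l2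
  | [], [], _, _, _ => rfl
  | [], b :: t2, _, _, hm => by simpa using (hm b).mpr (by simp)
  | a :: t1, [], _, _, hm => by simpa using (hm a).mp (by simp)
  | a :: t1, b :: t2, h1, h2, hm => by
    rw [List.pairwise_cons] at h1 h2
    have hab : a = b := by
      rcases List.mem_cons.mp ((hm a).mp (by simp)) with h | h
      · exact h
      · rcases List.mem_cons.mp ((hm b).mpr (by simp)) with h' | h'
        · exact h'.symm
        · exact absurd (lt_trans (h1.1 b h') (h2.1 a h)) (lt_irrefl _)
    subst hab
    have : t1 = t2 := nct_sorted_eq t1 t2 h1.2 h2.2 (fun x => by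
      constructor
      · intro hx
        rcases List.mem_cons.mp ((hm x).mp (List.mem_cons_of_mem _ hx)) with rfl | h
        · exact absurd (h1.1 x hx) (lt_irrefl _)
        · exact h
      · intro hx
        rcases List.mem_cons.mp ((hm x).mpr (List.mem_cons_of_mem _ hx)) with rfl | h
        · exact absurd (h2.1 x hx) (lt_irrefl _)
        · exact h)
    rw [this]

lemma nct_head?_eq (l : List α) (hp : l.Pairwise (· < ·)) (x : α) (hx : x ∈ l)
    (hall : ∀ y ∈ l, x ≤ y) : l.head? = some x := by
  cases l with
  | nil => simp at hx
  | cons a t =>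
    rw [List.pairwise_cons] at hp
    rcases List.mem_cons.mp hx with rfl | hx
    · rfl
    · exact absurd (hall a (by simp)) (not_le.mpr (hp.1 x hx))

lemma nct_getLast?_eq :
    ∀ (l : List α), l.Pairwise (· < ·) → ∀ x ∈ l, (∀ y ∈ l, y ≤ x) → l.getLast? = some x
  | [], _, x, hx, _ => by simp at hx
  | [a], _, x, hx, _ => by simp at hx; simp [hx]
  | a :: b :: t, hp, x, hx, hall => by
    rw [List.pairwise_cons] at hp
    have hx' : x ∈ b :: t := by
      rcases List.mem_cons.mp hx with rfl | hx
      · exact absurd (hall b (by simp)) (not_le.mpr (hp.1 b (by simp)))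
      · exact hx
    rw [List.getLast?_cons_cons]
    exact nct_getLast?_eq (b :: t) hp.2 x hx' (fun y hy => hall y (List.mem_cons_of_mem _ hy))
end ListLemmas

lemma nct_cut {V : Type*} [LinearOrder V] {G : SimpleGraph V} {c : V}
    (hedge : ∀ u v, G.Adj u v → (u ≤ c ∧ v ≤ c) ∨ (c ≤ u ∧ c ≤ v)) :
    ∀ {x y : V} (w : G.Walk x y), x ≤ c → c ≤ y → c ∈ w.support := by
  intro x y w
  induction w with
  | nil =>
    intro h1 h2
    simp [le_antisymm h2 h1]
  | cons hadj w ih =>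
    intro h1 h2
    rcases eq_or_lt_of_le h1 with rfl | hx
    · simp
    · rcases hedge _ _ hadj with ⟨_, hz⟩ | ⟨hcx, _⟩
      · exact List.mem_cons_of_mem _ (ih hz h2)
      · exact absurd hcx (not_le.mpr hx)

lemma nct_adj_mem {n : ℕ} {E : Finset (Fin (n+1) × Fin (n+1))} (h1 : ∀ e ∈ E, e.1 < e.2)
    {u v : Fin (n+1)} (huv : u < v)
    (hadj : (SimpleGraph.fromEdgeSet
      {s : Sym2 (Fin (n+1)) | ∃ e ∈ E, s = s(e.1, e.2)}).Adj u v) : (u, v) ∈ E := by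
  rw [SimpleGraph.fromEdgeSet_adj] at hadj
  obtain ⟨⟨e, he, heq⟩, -⟩ := hadj
  rw [Sym2.eq_iff] at heq
  rcases heq with ⟨h1', h2'⟩ | ⟨h1', h2'⟩
  · have : e = (u, v) := by rw [Prod.ext_iff]; exact ⟨h1'.symm, h2'.symm⟩
    rwa [← this]
  · exact absurd (h1' ▸ h2' ▸ h1 e he) (not_lt.mpr huv.le)

lemma nct_edge_cut {n : ℕ} {E : Finset (Fin (n+1) × Fin (n+1))} (h1 : ∀ e ∈ E, e.1 < e.2)
    {c : Fin (n+1)} (hc : ∀ e ∈ E, ¬(e.1 < c ∧ c < e.2)) :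
    ∀ u v, (SimpleGraph.fromEdgeSet
      {s : Sym2 (Fin (n+1)) | ∃ e ∈ E, s = s(e.1, e.2)}).Adj u v →
      (u ≤ c ∧ v ≤ c) ∨ (c ≤ u ∧ c ≤ v) := by
  intro u v hadj
  rw [SimpleGraph.fromEdgeSet_adj] at hadj
  obtain ⟨⟨e, he, heq⟩, -⟩ := hadj
  have hnc := hc e he
  have hcase : e.2 ≤ c ∨ c ≤ e.1 := by
    by_contra hcon
    push_neg at hcon
    exact hnc ⟨hcon.2, hcon.1⟩
  rw [Sym2.eq_iff] at heq
  have hee := (h1 e he).le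
  rcases heq with ⟨h1', h2'⟩ | ⟨h1', h2'⟩ <;> subst h1' <;> subst h2'
  · rcases hcase with hh | hh
    · exact Or.inl ⟨le_trans hee hh, hh⟩
    · exact Or.inr ⟨hh, le_trans hh hee⟩
  · rcases hcase with hh | hh
    · exact Or.inl ⟨hh, le_trans hee hh⟩
    · exact Or.inr ⟨le_trans hh hee, hh⟩

lemma nct_consec_edge {n : ℕ} {E : Finset (Fin (n+1) × Fin (n+1))} (h : IsNCT n E)
    {a b : Fin (n+1)} (hab : a < b)
    (ha : ∀ e ∈ E, ¬(e.1 < a ∧ a < e.2)) (hb : ∀ e ∈ E, ¬(e.1 < b ∧ b < e.2))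
    (hmid : ∀ c, a < c → c < b → ∃ e ∈ E, e.1 < c ∧ c < e.2) :
    (a, b) ∈ E := by
  obtain ⟨h1, h2, h3⟩ := h
  set G := SimpleGraph.fromEdgeSet
    {s : Sym2 (Fin (n+1)) | ∃ e ∈ E, s = s(e.1, e.2)} with hG
  -- step 1: find some x with a < x ≤ b and (a, x) ∈ E
  have hstep : ∃ x, a < x ∧ x ≤ b ∧ (a, x) ∈ E := by
    have hreach : G.Reachable a b := h3.isConnected.preconnected a b
    obtain ⟨w⟩ := hreach
    have hp := w.toPath.2
    set p := w.toPath.1 with hpdef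
    clear_value p
    cases p with
    | nil => exact absurd rfl hab.ne
    | @cons _ v _ hadj w' =>
      have hvb : v ≤ b := by
        rcases nct_edge_cut h1 hb a v hadj with ⟨_, hh⟩ | ⟨hh, _⟩
        · exact hh
        · exact absurd hh (not_le.mpr hab)
      have hav : a < v := by
        rcases lt_or_ge a v with hh | hh
        · exact hh
        have hva : v ≤ a := hh
        have : a ∈ w'.support :=
          nct_cut (nct_edge_cut h1 ha) w' hva hab.le
        rw [SimpleGraph.Walk.cons_isPath_iff] at hp
        exact absurd this hp.2
      exact ⟨v, hav, hvb, nct_adj_mem h1 hav hadj⟩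
  obtain ⟨x, hax, hxb, hxE⟩ := hstep
  -- step 2: maximal such x
  set T := (E.filter (fun e => e.1 = a ∧ e.2 ≤ b)).image Prod.snd with hT
  have hTne : T.Nonempty := ⟨x, Finset.mem_image.mpr ⟨(a, x),
    Finset.mem_filter.mpr ⟨hxE, rfl, hxb⟩, rfl⟩⟩
  set d := T.max' hTne with hd
  have hmax : ∀ y ∈ T, y ≤ d := fun y hy => T.le_max' y hy
  obtain ⟨e, hem, hesnd⟩ := Finset.mem_image.mp (T.max'_mem hTne)
  clear_value d
  rw [← hd] at hesnd
  obtain ⟨heE, he1, he2⟩ := Finset.mem_filter.mp hem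
  have hdE : (a, d) ∈ E := by
    have : e = (a, d) := by rw [Prod.ext_iff]; exact ⟨he1, hesnd⟩
    rwa [← this]
  have hadlt : a < d := by
    have := h1 e heE
    rwa [he1, hesnd] at this
  have hdb : d ≤ b := hesnd ▸ he2
  rcases eq_or_lt_of_le hdb with rfl | hdlt
  · exact hdE
  · exfalso
    obtain ⟨f, hfE, hf1, hf2⟩ := hmid d hadlt hdlt
    have hfa : a ≤ f.1 := by
      by_contra hcon
      exact ha f hfE ⟨not_le.mp hcon, lt_trans hadlt hf2⟩
    have hfb : f.2 ≤ b := by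
      by_contra hcon
      exact hb f hfE ⟨lt_trans hf1 hdlt, not_le.mp hcon⟩
    have hfa' : f.1 = a := by
      rcases eq_or_lt_of_le hfa with hh | hh
      · exact hh.symm
      · exact absurd (Or.inl ⟨hh, hf1, hf2⟩) (h2 (a, d) hdE f hfE)
    have : f.2 ∈ T := Finset.mem_image.mpr ⟨f, Finset.mem_filter.mpr ⟨hfE, hfa', hfb⟩, rfl⟩
    exact absurd (hmax _ this) (not_le.mpr hf2)

/-- Each noncrossing tree `E` has a unique decomposition as a `*`-product of
based noncrossing trees: there is a unique increasing list of vertices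
`0 = a₀ < a₁ < … < a_k = n` such that each consecutive pair `(a_{i-1}, a_i)`
is an edge of `E` (the unique path in `E` from the left endpoint to the right
endpoint of the base side) and every edge of `E` lies within one of the
intervals `[a_{i-1}, a_i]` (so that `E` restricted to `[a_{i-1}, a_i]` is a
based noncrossing tree, the `i`-th factor). -/
theorem stmt13 (n : ℕ) (E : Finset (Fin (n+1) × Fin (n+1))) (h : IsNCT n E) :
    ∃! l : List (Fin (n+1)),
      List.Chain' (· < ·) l ∧
      l.head? = some 0 ∧ l.getLast? = some (Fin.last n) ∧
      (∀ p ∈ l.zip l.tail, p ∈ E) ∧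
      (∀ e ∈ E, ∃ p ∈ l.zip l.tail, p.1 ≤ e.1 ∧ e.2 ≤ p.2) := by
  
  classical
  set S : Finset (Fin (n+1)) :=
    Finset.univ.filter (fun a => ∀ e ∈ E, ¬(e.1 < a ∧ a < e.2)) with hSdef
  have hmemS : ∀ a : Fin (n+1), a ∈ S ↔ ∀ e ∈ E, ¬(e.1 < a ∧ a < e.2) := by
    intro a; simp [hSdef]
  have hS0 : (0 : Fin (n+1)) ∈ S :=
    (hmemS 0).mpr (fun e _ hc => absurd hc.1 (not_lt.mpr (Fin.zero_le e.1)))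
  have hSn : Fin.last n ∈ S :=
    (hmemS _).mpr (fun e _ hc => absurd hc.2 (not_lt.mpr (Fin.le_last e.2)))
  set l := S.sort (· ≤ ·) with hldef
  have hlm : ∀ x, x ∈ l ↔ x ∈ S := fun x => Finset.mem_sort _
  have hlp : l.Pairwise (· < ·) := List.sortedLT_iff_pairwise.mp (Finset.sortedLT_sort S)
  refine ⟨l, ⟨List.isChain_iff_pairwise.mpr hlp, ?_, ?_, ?_, ?_⟩, ?_⟩
  · exact nct_head?_eq l hlp 0 ((hlm 0).mpr hS0) (fun y _ => Fin.zero_le y)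
  · exact nct_getLast?_eq l hlp (Fin.last n) ((hlm _).mpr hSn) (fun y _ => Fin.le_last y)
  · -- consecutive pairs are edges
    intro p hp
    obtain ⟨hp1, hp2, hp12, hno⟩ := nct_pairs_spec l hlp p hp
    have hkey : (p.1, p.2) ∈ E := by
      refine nct_consec_edge h hp12 ((hmemS _).mp ((hlm _).mp hp1))
        ((hmemS _).mp ((hlm _).mp hp2)) ?_
      intro c hc1 hc2
      by_contra hcon
      push_neg at hcon
      have hcS : c ∈ S := (hmemS c).mpr (fun e he hc => absurd hc.2 (not_lt.mpr (hcon e he hc.1)))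
      exact hno c ((hlm c).mpr hcS) ⟨hc1, hc2⟩
    simpa using hkey
  · -- coverage
    intro e he
    have h1e := h.1 e he
    have hAne : (S.filter (· ≤ e.1)).Nonempty :=
      ⟨0, Finset.mem_filter.mpr ⟨hS0, Fin.zero_le _⟩⟩
    have hBne : (S.filter (fun c => e.2 ≤ c)).Nonempty :=
      ⟨Fin.last n, Finset.mem_filter.mpr ⟨hSn, Fin.le_last _⟩⟩
    set x := (S.filter (· ≤ e.1)).max' hAne with hx
    set y := (S.filter (fun c => e.2 ≤ c)).min' hBne with hy
    obtain ⟨hxS, hxle⟩ := Finset.mem_filter.mp ((S.filter (· ≤ e.1)).max'_mem hAne)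
    obtain ⟨hyS, hley⟩ := Finset.mem_filter.mp ((S.filter (fun c => e.2 ≤ c)).min'_mem hBne)
    have hxy : x < y := lt_of_le_of_lt hxle (lt_of_lt_of_le h1e hley)
    have hno : ∀ c ∈ l, ¬(x < c ∧ c < y) := by
      rintro c hc ⟨hxc, hcy⟩
      have hcS : c ∈ S := (hlm c).mp hc
      rcases le_or_gt c e.1 with hh | hh
      · exact absurd ((S.filter (· ≤ e.1)).le_max' c (Finset.mem_filter.mpr ⟨hcS, hh⟩))
          (not_le.mpr hxc)
      rcases le_or_gt e.2 c with hh2 | hh2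
      · exact absurd ((S.filter (fun c => e.2 ≤ c)).min'_le c (Finset.mem_filter.mpr ⟨hcS, hh2⟩))
          (not_le.mpr hcy)
      · exact (hmemS c).mp hcS e he ⟨hh, hh2⟩
    exact ⟨(x, y), nct_mem_zip l hlp x y ((hlm x).mpr hxS) ((hlm y).mpr hyS) hxy hno,
      hxle, hley⟩
  · -- uniqueness
    rintro l' ⟨hc', hh', hl', hp', hcov'⟩
    have hl'p : l'.Pairwise (· < ·) := List.isChain_iff_pairwise.mp hc'
    have hne : l' ≠ [] := by
      intro hcon; rw [hcon] at hh'; simp at hh'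
    have hhead : l'.head hne = 0 := by
      have := List.head?_eq_head hne
      rw [hh'] at this; exact (Option.some_inj.mp this).symm
    have hlast : l'.getLast hne = Fin.last n := by
      have := List.getLast?_eq_getLast hne
      rw [hl'] at this; exact (Option.some_inj.mp this.symm)
    refine nct_sorted_eq l' l hl'p hlp ?_
    intro x
    constructor
    · intro hx
      rw [hlm, hmemS]
      rintro e he ⟨hs1, hs2⟩
      obtain ⟨p, hpz, hpe1, hpe2⟩ := hcov' e he
      exact (nct_pairs_spec l' hl'p p hpz).2.2.2 x hx
        ⟨lt_of_le_of_lt hpe1 hs1, lt_of_lt_of_le hs2 hpe2⟩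
    · intro hx
      have hxS := (hmemS x).mp ((hlm x).mp hx)
      rcases nct_mem_or_between l' hne x (hhead ▸ Fin.zero_le x) (hlast ▸ Fin.le_last x)
        with hm | ⟨p, hpz, h1, h2⟩
      · exact hm
      · exact absurd ⟨h1, h2⟩ (hxS p (hp' p hpz))
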